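/- Let X be an algebraic toric set in P^{s-1} parameterized by the monomials arising from the edges of a clutter, and let δ_d denote the minimum distance of the parameterized linear code C_X(d). Then δ_d = 1 for every degree d with d ≥ reg(S/I(X)), the index of regularity of S/I(X). -/

import Mathlib

noncomputable section

open scoped BigOperators

/-- The vanishing ideal `I(Y)` of a set `Y` of points in projective space: the ideal
generated by the homogeneous polynomials vanishing at every point of `Y`. -/
def vanishingIdeal (K : Type*) [Field K] {s : ℕ}
    (Y : Set (Projectivization K (Fin s → K))) : Ideal (MvPolynomial (Fin s) K) :=
  Ideal.span {f | (∃ d, f.IsHomogeneous d) ∧ ∀ P ∈ Y, MvPolynomial.eval P.rep f = 0}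

/-- The Hilbert function `d ↦ dim_K (S/I)_d` of the standard graded quotient `S/I`. -/
def hilbertFunction {K : Type*} [Field K] {s : ℕ}
    (I : Ideal (MvPolynomial (Fin s) K)) (d : ℕ) : ℕ :=
  Module.finrank K ((MvPolynomial.homogeneousSubmodule (Fin s) K d).map
    (Ideal.Quotient.mkₐ K I).toLinearMap)

/-- The index of regularity of `S/I(Y)`: the least `p ≥ 0` such that
`H_Y(d) = |Y|` for all `d ≥ p`. -/
def regIndex {K : Type*} [Field K] {s : ℕ}
    (Y : Set (Projectivization K (Fin s → K))) : ℕ :=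
  sInf {p : ℕ | ∀ d, p ≤ d → hilbertFunction (vanishingIdeal K Y) d = Y.ncard}

/-- The algebraic toric set in `P^{s-1}` parameterized by the monomials `y^{v_1},…,y^{v_s}`. -/
def toricSet (K : Type*) [Field K] {n s : ℕ} (v : Fin s → Fin n → ℕ) :
    Set (Projectivization K (Fin s → K)) :=
  {P | ∃ x : Fin n → K, (∀ j, x j ≠ 0) ∧
      ∃ h : (fun i : Fin s => ∏ j, x j ^ v i j) ≠ 0,
        P = Projectivization.mk K (fun i : Fin s => ∏ j, x j ^ v i j) h}

/-- The projective torus in `P^{s-1}`: the points all of whose coordinates are nonzero. -/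
def projTorus (K : Type*) [Field K] (s : ℕ) : Set (Projectivization K (Fin s → K)) :=
  {P | ∀ i, P.rep i ≠ 0}

/-- The parameterized (evaluation) code `C_Y(d)`: the image of the degree-`d` evaluation map
`f ↦ (f(P)/t_1^d(P))_{P ∈ Y}`. -/
def evalCode (K : Type*) [Field K] {s : ℕ} [NeZero s]
    (Y : Set (Projectivization K (Fin s → K))) (d : ℕ) : Set (Y → K) :=
  {w | ∃ f ∈ MvPolynomial.homogeneousSubmodule (Fin s) K d,
      w = fun P : Y => MvPolynomial.eval (P : Projectivization K (Fin s → K)).rep f /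
        ((P : Projectivization K (Fin s → K)).rep 0) ^ d}

/-- The minimum distance of a code: the least number of nonzero entries of a
nonzero codeword. -/
def minDist {K : Type*} [Field K] {ι : Type*} (C : Set (ι → K)) : ℕ :=
  sInf {m | ∃ w ∈ C, w ≠ 0 ∧ m = {i | w i ≠ 0}.ncard}

/-- `v 1,…,v s` are the characteristic vectors of the edges of a clutter: all the entries
are in `{0,1}` and no edge (support) is contained in another. -/
def IsClutter {n s : ℕ} (v : Fin s → Fin n → ℕ) : Prop :=
  (∀ i j, v i j ≤ 1) ∧ ∀ i k : Fin s, i ≠ k → ∃ j, v i j ≠ 0 ∧ v k j = 0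

/-- An ideal of `K[t_1,…,t_s]` is a complete intersection if it can be generated by `s-1`
homogeneous polynomials. -/
def IsCompleteIntersection {K : Type*} [Field K] {s : ℕ}
    (I : Ideal (MvPolynomial (Fin s) K)) : Prop :=
  ∃ g : Fin (s - 1) → MvPolynomial (Fin s) K,
    (∀ i, ∃ d, (g i).IsHomogeneous d) ∧ Ideal.span (Set.range g) = I

end

noncomputable section AuxProof

open MvPolynomial

variable {K : Type*} [Field K] {s : ℕ} [NeZero s]

/-- The evaluation map as a linear map. -/
def evmap (Y : Set (Projectivization K (Fin s → K))) (d : ℕ) :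
    MvPolynomial (Fin s) K →ₗ[K] (Y → K) where
  toFun f := fun P : Y => MvPolynomial.eval (P : Projectivization K (Fin s → K)).rep f /
        ((P : Projectivization K (Fin s → K)).rep 0) ^ d
  map_add' f g := by funext P; simp [add_div]
  map_smul' a f := by funext P; simp [MvPolynomial.smul_eval, mul_div_assoc]

def evmapD (Y : Set (Projectivization K (Fin s → K))) (d : ℕ) :
    (MvPolynomial.homogeneousSubmodule (Fin s) K d) →ₗ[K] (Y → K) :=
  (evmap Y d).comp (MvPolynomial.homogeneousSubmodule (Fin s) K d).subtype

lemma vanish_of_mem_vanishingIdeal {Y : Set (Projectivization K (Fin s → K))}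
    {f : MvPolynomial (Fin s) K} (hf : f ∈ vanishingIdeal K Y)
    {P : Projectivization K (Fin s → K)} (hP : P ∈ Y) :
    MvPolynomial.eval P.rep f = 0 := by
  have hle : vanishingIdeal K Y ≤ RingHom.ker (MvPolynomial.eval P.rep) :=
    Ideal.span_le.mpr fun g hg => RingHom.mem_ker.mpr (hg.2 P hP)
  exact RingHom.mem_ker.mp (hle hf)

set_option synthInstance.maxHeartbeats 1000000 in
lemma hilbert_eq_finrank_range (Y : Set (Projectivization K (Fin s → K)))
    (hY : ∀ P ∈ Y, P.rep 0 ≠ 0) (d : ℕ) :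
    hilbertFunction (vanishingIdeal K Y) d
      = Module.finrank K (LinearMap.range (evmapD Y d)) := by
  set I := vanishingIdeal K Y
  set A : (MvPolynomial.homogeneousSubmodule (Fin s) K d) →ₗ[K] (MvPolynomial (Fin s) K ⧸ I) :=
    (Ideal.Quotient.mkₐ K I).toLinearMap.comp
      (MvPolynomial.homogeneousSubmodule (Fin s) K d).subtype with hA
  have h1 : hilbertFunction I d = Module.finrank K (LinearMap.range A) := by
    rw [hilbertFunction, hA, LinearMap.range_comp, Submodule.range_subtype]
  have hker : LinearMap.ker A = LinearMap.ker (evmapD Y d) := by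
    ext ⟨f, hf⟩
    simp only [LinearMap.mem_ker, hA, LinearMap.comp_apply, Submodule.subtype_apply]
    constructor
    · intro h
      have hfI : f ∈ I := by
        simpa [Ideal.Quotient.eq_zero_iff_mem] using h
      funext P
      have := vanish_of_mem_vanishingIdeal hfI P.2
      simp [evmapD, evmap, this]
    · intro h
      have hv : ∀ P ∈ Y, MvPolynomial.eval P.rep f = 0 := by
        intro P hP
        have := congrFun h ⟨P, hP⟩
        simp only [evmapD, evmap, LinearMap.comp_apply, Submodule.subtype_apply,
          LinearMap.coe_mk, AddHom.coe_mk, Pi.zero_apply] at this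
        have hc : (P.rep 0) ^ d ≠ 0 := pow_ne_zero _ (hY P hP)
        exact (div_eq_zero_iff.mp this).resolve_right hc
      have : f ∈ I := Ideal.subset_span ⟨⟨d, (MvPolynomial.mem_homogeneousSubmodule _ _).mp hf⟩, hv⟩
      simpa [Ideal.Quotient.eq_zero_iff_mem] using this
  calc hilbertFunction I d = Module.finrank K (LinearMap.range A) := h1
    _ = Module.finrank K ((MvPolynomial.homogeneousSubmodule (Fin s) K d) ⧸ LinearMap.ker A) :=
        (LinearMap.quotKerEquivRange A).symm.finrank_eq
    _ = Module.finrank K ((MvPolynomial.homogeneousSubmodule (Fin s) K d) ⧸ LinearMap.ker (evmapD Y d)) := by rw [hker]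
    _ = Module.finrank K (LinearMap.range (evmapD Y d)) :=
        (LinearMap.quotKerEquivRange (evmapD Y d)).finrank_eq

lemma exists_separator (Y : Set (Projectivization K (Fin s → K))) [Fintype Y]
    (hY : ∀ P ∈ Y, ∀ i, P.rep i ≠ 0) (P : Y) (d : ℕ) (hd : Fintype.card Y ≤ d + 1) :
    ∃ f ∈ MvPolynomial.homogeneousSubmodule (Fin s) K d,
      MvPolynomial.eval (P : Projectivization K (Fin s → K)).rep f ≠ 0 ∧
      ∀ Q : Y, Q ≠ P → MvPolynomial.eval (Q : Projectivization K (Fin s → K)).rep f = 0 := by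
  classical
  have key : ∀ Q : Y, Q ≠ P → ∃ i : Fin s,
      (P : Projectivization K (Fin s → K)).rep i * (Q : Projectivization K (Fin s → K)).rep 0
        ≠ (Q : Projectivization K (Fin s → K)).rep i * (P : Projectivization K (Fin s → K)).rep 0 := by
    intro Q hQ
    by_contra hc
    push_neg at hc
    apply hQ
    have hQ0 : (Q : Projectivization K (Fin s → K)).rep 0 ≠ 0 := hY _ Q.2 0
    have hP0 : (P : Projectivization K (Fin s → K)).rep 0 ≠ 0 := hY _ P.2 0
    have hsm : ((P : Projectivization K (Fin s → K)).rep 0 / (Q : Projectivization K (Fin s → K)).rep 0)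
        • (Q : Projectivization K (Fin s → K)).rep = (P : Projectivization K (Fin s → K)).rep := by
      funext i
      have := hc i
      rw [Pi.smul_apply, smul_eq_mul, div_mul_eq_mul_div, div_eq_iff hQ0]
      linear_combination -this
    have hPQ : (P : Projectivization K (Fin s → K)) = (Q : Projectivization K (Fin s → K)) := by
      conv_lhs => rw [← Projectivization.mk_rep (P : Projectivization K (Fin s → K))]
      conv_rhs => rw [← Projectivization.mk_rep (Q : Projectivization K (Fin s → K))]
      rw [Projectivization.mk_eq_mk_iff]
      exact ⟨Units.mk0 _ (div_ne_zero hP0 hQ0), by simpa [Units.smul_def] using hsm⟩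
    exact Subtype.ext (Subtype.ext_iff.mp (Subtype.ext hPQ)).symm ▸ (Subtype.ext hPQ).symm
  -- choose indices
  choose idx hidx using fun Q : Y => fun h : Q ≠ P => key Q h
  let i : Y → Fin s := fun Q => if h : Q = P then 0 else idx Q h
  let L : Y → MvPolynomial (Fin s) K := fun Q =>
    MvPolynomial.C ((Q : Projectivization K (Fin s → K)).rep 0) * MvPolynomial.X (i Q)
      - MvPolynomial.C ((Q : Projectivization K (Fin s → K)).rep (i Q)) * MvPolynomial.X 0
  have hLhom : ∀ Q : Y, (L Q).IsHomogeneous 1 := by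
    intro Q
    have h1 : (MvPolynomial.C ((Q : Projectivization K (Fin s → K)).rep 0) *
        MvPolynomial.X (i Q) : MvPolynomial (Fin s) K).IsHomogeneous 1 := by
      simpa using (MvPolynomial.isHomogeneous_C (Fin s)
        ((Q : Projectivization K (Fin s → K)).rep 0)).mul (MvPolynomial.isHomogeneous_X K (i Q))
    have h2 : (MvPolynomial.C ((Q : Projectivization K (Fin s → K)).rep (i Q)) *
        MvPolynomial.X 0 : MvPolynomial (Fin s) K).IsHomogeneous 1 := by
      simpa using (MvPolynomial.isHomogeneous_C (Fin s)
        ((Q : Projectivization K (Fin s → K)).rep (i Q))).mul (MvPolynomial.isHomogeneous_X K (0 : Fin s))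
    exact h1.sub h2
  have hcard : Fintype.card Y - 1 ≤ d := by omega
  set e : ℕ := d - (Fintype.card Y - 1) with he
  have hPmem : P ∈ (Finset.univ : Finset Y) := Finset.mem_univ P
  set g : MvPolynomial (Fin s) K :=
    (∏ Q ∈ Finset.univ.erase P, L Q) * MvPolynomial.X 0 ^ e with hg
  have hghom : g.IsHomogeneous d := by
    have hprod : (∏ Q ∈ Finset.univ.erase P, L Q).IsHomogeneous (Fintype.card Y - 1) := by
      have := MvPolynomial.IsHomogeneous.prod (Finset.univ.erase P) L (fun _ => 1)
        (fun Q _ => hLhom Q)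
      have hc : ∑ _Q ∈ Finset.univ.erase P, 1 = Fintype.card Y - 1 := by
        rw [Finset.sum_const, smul_eq_mul, mul_one, Finset.card_erase_of_mem hPmem,
          Finset.card_univ]
      rwa [hc] at this
    have hxp : (MvPolynomial.X 0 ^ e : MvPolynomial (Fin s) K).IsHomogeneous e := by
      simpa using (MvPolynomial.isHomogeneous_X K (0 : Fin s)).pow e
    have := hprod.mul hxp
    rwa [show Fintype.card Y - 1 + e = d by omega] at this
  have hevalL : ∀ (Q : Y) (x : Fin s → K), MvPolynomial.eval x (L Q)
      = (Q : Projectivization K (Fin s → K)).rep 0 * x (i Q)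
        - (Q : Projectivization K (Fin s → K)).rep (i Q) * x 0 := by
    intro Q x; simp [L]
  refine ⟨g, (MvPolynomial.mem_homogeneousSubmodule _ _).mpr hghom, ?_, ?_⟩
  · rw [hg, map_mul, map_pow]
    apply mul_ne_zero
    · rw [map_prod]
      rw [Finset.prod_ne_zero_iff]
      intro Q hQmem
      have hQne : Q ≠ P := (Finset.mem_erase.mp hQmem).1
      rw [hevalL]
      have := hidx Q hQne
      have hiQ : i Q = idx Q hQne := by simp [i, hQne]
      rw [hiQ]
      intro hzero
      apply this
      have := sub_eq_zero.mp hzero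
      linear_combination this
    · simpa using pow_ne_zero e (hY _ P.2 0)
  · intro Q hQne
    rw [hg, map_mul, map_prod]
    apply mul_eq_zero_of_left
    apply Finset.prod_eq_zero (Finset.mem_erase.mpr ⟨hQne, Finset.mem_univ Q⟩)
    rw [hevalL]
    ring

lemma range_evmapD_eq_top (Y : Set (Projectivization K (Fin s → K))) [Fintype Y]
    (hY : ∀ P ∈ Y, ∀ i, P.rep i ≠ 0) (d : ℕ) (hd : Fintype.card Y ≤ d + 1) :
    LinearMap.range (evmapD Y d) = ⊤ := by
  classical
  rw [eq_top_iff]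
  intro w _
  have hw : w = ∑ P : Y, Pi.single P (w P) := (Finset.univ_sum_single w).symm
  rw [hw]
  apply Submodule.sum_mem
  intro P _
  obtain ⟨f, hfmem, hfP, hf0⟩ := exists_separator Y hY P d hd
  set c : K := MvPolynomial.eval (P : Projectivization K (Fin s → K)).rep f with hc
  set p0 : K := (P : Projectivization K (Fin s → K)).rep 0 with hp0
  have hp0ne : p0 ≠ 0 := hY _ P.2 0
  refine ⟨(w P * p0 ^ d / c) • ⟨f, hfmem⟩, ?_⟩
  rw [map_smul]
  funext Q
  simp only [Pi.smul_apply, smul_eq_mul]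
  have hBQ : evmapD Y d ⟨f, hfmem⟩ Q
      = MvPolynomial.eval (Q : Projectivization K (Fin s → K)).rep f
        / ((Q : Projectivization K (Fin s → K)).rep 0) ^ d := rfl
  rw [hBQ]
  by_cases hQP : Q = P
  · subst hQP
    rw [Pi.single_eq_same]
    have hcne : c ≠ 0 := hfP
    field_simp
    rw [← hc, ← hp0]
    field_simp
  · rw [Pi.single_eq_of_ne hQP, hf0 Q hQP, zero_div, mul_zero]

lemma toricSet_nonempty (K : Type*) [Field K] {n : ℕ} (v : Fin s → Fin n → ℕ) :
    (toricSet K v).Nonempty := by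
  have h : (fun i : Fin s => ∏ j, (1 : K) ^ v i j) ≠ 0 := by
    intro hc
    have := congrFun hc 0
    simp at this
  exact ⟨Projectivization.mk K _ h, ⟨fun _ => 1, fun _ => one_ne_zero, h, rfl⟩⟩

lemma toricSet_torus {n : ℕ} (v : Fin s → Fin n → ℕ)
    {P : Projectivization K (Fin s → K)} (hP : P ∈ toricSet K v) :
    ∀ i, P.rep i ≠ 0 := by
  obtain ⟨x, hx, h, rfl⟩ := hP
  intro i
  have hu : ∀ k : Fin s, (∏ j, x j ^ v k j) ≠ 0 :=
    fun k => Finset.prod_ne_zero_iff.mpr fun j _ => pow_ne_zero _ (hx j)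
  set u : Fin s → K := fun k : Fin s => ∏ j, x j ^ v k j with hudef
  have hmk : Projectivization.mk K
      (Projectivization.mk K u h).rep (Projectivization.rep_nonzero _) = Projectivization.mk K u h :=
    Projectivization.mk_rep _
  rw [Projectivization.mk_eq_mk_iff] at hmk
  obtain ⟨a, ha⟩ := hmk
  rw [← ha]
  simp only [Pi.smul_apply, Units.smul_def, smul_eq_mul]
  exact mul_ne_zero (Units.ne_zero a) (hu i)

end AuxProof

/-- For an algebraic toric set `X` parameterized by the monomials of the
edges of a clutter, the minimum distance of `C_X(d)` equals `1` for every
`d ≥ reg(S/I(X))`. -/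
theorem stmt0 {K : Type*} [Field K] [Fintype K] {q n s : ℕ} [NeZero s]
    (hq : Fintype.card K = q) (hq3 : 3 ≤ q) (hs : 2 ≤ s)
    (v : Fin s → Fin n → ℕ) (hv : IsClutter v)
    (d : ℕ) (hd : regIndex (toricSet K v) ≤ d) :
    minDist (evalCode K (toricSet K v) d) = 1 := by
  classical
  set Y := toricSet K v with hYdef
  haveI : Finite (Projectivization K (Fin s → K)) := Quotient.finite _
  haveI : Fintype Y := Fintype.ofFinite _
  have htorus : ∀ P ∈ Y, ∀ i, P.rep i ≠ 0 := fun P hP => toricSet_torus v hP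
  have htorus0 : ∀ P ∈ Y, P.rep 0 ≠ 0 := fun P hP => htorus P hP 0
  have hne : Y.Nonempty := toricSet_nonempty K v
  have hncard : Y.ncard = Fintype.card Y := by
    rw [← Nat.card_coe_set_eq, Nat.card_eq_fintype_card]
  have hfrpi : Module.finrank K (↥Y → K) = Fintype.card Y := Module.finrank_pi K
  -- the Hilbert function eventually equals |Y|
  have hstab : ∀ d', Fintype.card Y ≤ d' + 1 →
      hilbertFunction (vanishingIdeal K Y) d' = Y.ncard := by
    intro d' hd'
    rw [hilbert_eq_finrank_range Y htorus0 d', range_evmapD_eq_top Y htorus d' hd',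
      finrank_top, hfrpi, hncard]
  -- hence the defining set of regIndex is nonempty, and d is in it
  have hsetne : ({p : ℕ | ∀ d', p ≤ d' →
      hilbertFunction (vanishingIdeal K Y) d' = Y.ncard}).Nonempty :=
    ⟨Fintype.card Y, fun d' hd' => hstab d' (by omega)⟩
  have hmem := Nat.sInf_mem hsetne
  have hHd : hilbertFunction (vanishingIdeal K Y) d = Y.ncard := hmem d hd
  -- surjectivity of the evaluation map in degree d
  have hrange : LinearMap.range (evmapD Y d) = ⊤ := by
    apply Submodule.eq_top_of_finrank_eq
    rw [← hilbert_eq_finrank_range Y htorus0 d, hHd, hncard, hfrpi]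
  -- the indicator vector of a point is a codeword
  obtain ⟨P₀, hP₀⟩ := hne
  have hsingle : (Pi.single (⟨P₀, hP₀⟩ : Y) (1 : K)) ∈ evalCode K Y d := by
    have : (Pi.single (⟨P₀, hP₀⟩ : Y) (1 : K)) ∈ LinearMap.range (evmapD Y d) := by
      rw [hrange]; trivial
    obtain ⟨g, hg⟩ := this
    exact ⟨g.1, g.2, hg.symm⟩
  -- compute the minimum distance
  have h1mem : 1 ∈ {m | ∃ w ∈ evalCode K Y d, w ≠ 0 ∧ m = {i | w i ≠ 0}.ncard} := by
    refine ⟨Pi.single (⟨P₀, hP₀⟩ : Y) (1 : K), hsingle, ?_, ?_⟩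
    · intro hc
      have := congrFun hc (⟨P₀, hP₀⟩ : Y)
      simp at this
    · have : {i : Y | (Pi.single (⟨P₀, hP₀⟩ : Y) (1 : K) : Y → K) i ≠ 0} = {(⟨P₀, hP₀⟩ : Y)} := by
        ext Q
        simp [Pi.single_apply]
      rw [this, Set.ncard_singleton]
  have hlb : ∀ m ∈ {m | ∃ w ∈ evalCode K Y d, w ≠ 0 ∧ m = {i | w i ≠ 0}.ncard}, 1 ≤ m := by
    rintro m ⟨w, _, hwne, rfl⟩
    have hnonempty : {i | w i ≠ 0}.Nonempty := by
      by_contra hc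
      apply hwne
      funext i
      rw [Set.not_nonempty_iff_eq_empty] at hc
      by_contra hwi
      exact absurd (Set.eq_empty_iff_forall_notMem.mp hc i) (fun h => h hwi)
    exact (Set.ncard_pos (Set.toFinite _)).mpr hnonempty
  rw [minDist]
  exact le_antisymm (Nat.sInf_le h1mem) (hlb _ (Nat.sInf_mem ⟨1, h1mem⟩))
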